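/- Let M = (m₁,…,mₙ) ∈ ℕⁿ with each mⱼ ≥ 1 and set m_* = min_{1≤j≤n} mⱼ. Then for every s > n/m_*, the power ⟨·⟩_M^s of the quasi-homogeneous weight satisfies Beurling's condition (B): sup_{ξ∈ℝⁿ} ∫_{ℝⁿ} ⟨ξ⟩_M^s/(⟨ξ−η⟩_M^s ⟨η⟩_M^s) dη < ∞. -/

import Mathlib

open MeasureTheory

/-- The quasi-homogeneous weight `⟨ξ⟩_M = (1 + Σ_j ξ_j^(2 m_j))^(1/2)` on `ℝⁿ`. -/
noncomputable def quasiHomWeight {n : ℕ} (M : Fin n → ℕ) (ξ : EuclideanSpace ℝ (Fin n)) : ℝ :=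
  Real.sqrt (1 + ∑ j, ξ j ^ (2 * M j))

lemma scalar_peetre (a b : ℝ) (m K : ℕ) (hm : m ≤ K) :
    (a + b) ^ (2 * m) ≤ 4 ^ K * (a ^ (2 * m) + b ^ (2 * m)) := by
  have h1 : (a + b) ^ (2 * m) = |a + b| ^ (2 * m) := ((even_two_mul m).pow_abs _).symm
  have ha : a ^ (2 * m) = |a| ^ (2 * m) := ((even_two_mul m).pow_abs _).symm
  have hb : b ^ (2 * m) = |b| ^ (2 * m) := ((even_two_mul m).pow_abs _).symm
  rw [h1, ha, hb]
  have h2 : |a + b| ≤ 2 * max |a| |b| := by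
    calc |a + b| ≤ |a| + |b| := abs_add_le _ _
    _ ≤ 2 * max |a| |b| := by
        rcases le_total |a| |b| with h | h <;> simp [max_eq_right, max_eq_left, h] <;> linarith
  calc |a + b| ^ (2 * m) ≤ (2 * max |a| |b|) ^ (2 * m) :=
        pow_le_pow_left₀ (abs_nonneg _) h2 _
    _ = 4 ^ m * (max |a| |b|) ^ (2 * m) := by rw [mul_pow, pow_mul]; norm_num
    _ ≤ 4 ^ K * (|a| ^ (2 * m) + |b| ^ (2 * m)) := by
        have h3 : (max |a| |b|) ^ (2 * m) ≤ |a| ^ (2 * m) + |b| ^ (2 * m) := by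
          rcases le_total |a| |b| with h | h
          · rw [max_eq_right h]; nlinarith [pow_nonneg (abs_nonneg a) (2*m)]
          · rw [max_eq_left h]; nlinarith [pow_nonneg (abs_nonneg b) (2*m)]
        have h4 : (4:ℝ) ^ m ≤ 4 ^ K := pow_le_pow_right₀ (by norm_num) hm
        have hmx : (0:ℝ) ≤ (max |a| |b|) ^ (2*m) := pow_nonneg (le_max_of_le_left (abs_nonneg _)) _
        nlinarith [pow_pos (show (0:ℝ) < 4 by norm_num) K]

lemma qhw_sum_nonneg {n : ℕ} (M : Fin n → ℕ) (x : EuclideanSpace ℝ (Fin n)) :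
    0 ≤ ∑ j, x j ^ (2 * M j) :=
  Finset.sum_nonneg fun _ _ => (even_two_mul _).pow_nonneg _

lemma qhw_one_le {n : ℕ} (M : Fin n → ℕ) (x : EuclideanSpace ℝ (Fin n)) :
    1 ≤ quasiHomWeight M x := by
  rw [quasiHomWeight]
  rw [show (1:ℝ) = Real.sqrt 1 from (Real.sqrt_one).symm]
  exact Real.sqrt_le_sqrt (by simpa using qhw_sum_nonneg M x)

lemma qhw_pos {n : ℕ} (M : Fin n → ℕ) (x : EuclideanSpace ℝ (Fin n)) :
    0 < quasiHomWeight M x := lt_of_lt_of_le one_pos (by simpa using qhw_one_le M x)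

lemma qhw_sq {n : ℕ} (M : Fin n → ℕ) (x : EuclideanSpace ℝ (Fin n)) :
    quasiHomWeight M x ^ 2 = 1 + ∑ j, x j ^ (2 * M j) :=
  Real.sq_sqrt (by linarith [qhw_sum_nonneg M x])

lemma qhw_peetre {n : ℕ} (M : Fin n → ℕ) (ξ η : EuclideanSpace ℝ (Fin n)) :
    quasiHomWeight M ξ ≤ Real.sqrt (2 * 4 ^ (Finset.univ.sup M)) *
      max (quasiHomWeight M (ξ - η)) (quasiHomWeight M η) := by
  set K := Finset.univ.sup M with hK
  set A := ∑ j, (ξ - η) j ^ (2 * M j) with hA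
  set B := ∑ j, η j ^ (2 * M j) with hB
  have hA0 : 0 ≤ A := qhw_sum_nonneg M _
  have hB0 : 0 ≤ B := qhw_sum_nonneg M _
  have h4 : (1:ℝ) ≤ 4 ^ K := one_le_pow₀ (by norm_num)
  have hsum : ∑ j, ξ j ^ (2 * M j) ≤ 4 ^ K * (A + B) := by
    rw [hA, hB, ← Finset.sum_add_distrib, Finset.mul_sum]
    refine Finset.sum_le_sum fun j _ => ?_
    have hj : ξ j = (ξ - η) j + η j := by
      simp [PiLp.sub_apply]
    rw [hj]
    exact scalar_peetre _ _ _ K (Finset.le_sup (Finset.mem_univ j))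
  have hQ : 1 + ∑ j, ξ j ^ (2 * M j) ≤ (2 * 4 ^ K) * max (1 + A) (1 + B) := by
    rcases le_total A B with h | h
    · rw [max_eq_right (by linarith)]; nlinarith
    · rw [max_eq_left (by linarith)]; nlinarith
  have hmax : max (1 + A) (1 + B) =
      max (quasiHomWeight M (ξ - η)) (quasiHomWeight M η) ^ 2 := by
    rcases le_total A B with h | h
    · rw [max_eq_right (by linarith), max_eq_right, qhw_sq]
      exact Real.sqrt_le_sqrt (by linarith)
    · rw [max_eq_left (by linarith), max_eq_left, qhw_sq]
      exact Real.sqrt_le_sqrt (by linarith)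
  calc quasiHomWeight M ξ
      = Real.sqrt (1 + ∑ j, ξ j ^ (2 * M j)) := rfl
    _ ≤ Real.sqrt ((2 * 4 ^ K) * max (quasiHomWeight M (ξ - η)) (quasiHomWeight M η) ^ 2) := by
        apply Real.sqrt_le_sqrt; rw [← hmax]; exact hQ
    _ = Real.sqrt (2 * 4 ^ K) * max (quasiHomWeight M (ξ - η)) (quasiHomWeight M η) := by
        rw [Real.sqrt_mul (by positivity), Real.sqrt_sq]
        exact le_max_of_le_left (qhw_pos M _).le

lemma ratio_aux (w a b c s : ℝ) (ha : 0 < a) (hb : 0 < b) (hc : 0 < c)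
    (hw : 0 ≤ w) (hs : 0 ≤ s) (h : w ≤ c * max a b) :
    w ^ s / (a ^ s * b ^ s) ≤ c ^ s * (a ^ (-s) + b ^ (-s)) := by
  have has : 0 < a ^ s := Real.rpow_pos_of_pos ha s
  have hbs : 0 < b ^ s := Real.rpow_pos_of_pos hb s
  have hcs : 0 < c ^ s := Real.rpow_pos_of_pos hc s
  rw [Real.rpow_neg ha.le, Real.rpow_neg hb.le, div_le_iff₀ (by positivity)]
  have expand : c ^ s * ((a ^ s)⁻¹ + (b ^ s)⁻¹) * (a ^ s * b ^ s)
      = c ^ s * (b ^ s + a ^ s) := by field_simp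
  rw [expand]
  rcases le_total a b with hab | hab
  · have : w ^ s ≤ (c * b) ^ s :=
      Real.rpow_le_rpow hw (by rwa [max_eq_right hab] at h) hs
    rw [Real.mul_rpow hc.le hb.le] at this
    nlinarith
  · have : w ^ s ≤ (c * a) ^ s :=
      Real.rpow_le_rpow hw (by rwa [max_eq_left hab] at h) hs
    rw [Real.mul_rpow hc.le ha.le] at this
    nlinarith

lemma invert_aux (t w D s : ℝ) (m : ℕ) (ht : 0 < t) (hw : 0 < w) (hD : 0 < D)
    (hs : 0 ≤ s) (h : t ^ (2 * m) ≤ D * w ^ 2) :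
    w ^ (-s) ≤ D ^ (s / 2) * t ^ (-((m : ℝ) * s)) := by
  have key : t ^ ((m : ℝ) * s) ≤ D ^ (s / 2) * w ^ s := by
    have h1 : (t ^ (2 * m) : ℝ) ^ (s / 2) ≤ (D * w ^ 2) ^ (s / 2) :=
      Real.rpow_le_rpow (by positivity) h (by positivity)
    have e1 : (t ^ (2 * m) : ℝ) ^ (s / 2) = t ^ ((m : ℝ) * s) := by
      rw [← Real.rpow_natCast t (2 * m), ← Real.rpow_mul ht.le]
      norm_num; ring_nf
    have e2 : (D * w ^ 2 : ℝ) ^ (s / 2) = D ^ (s / 2) * w ^ s := by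
      rw [Real.mul_rpow hD.le (by positivity)]
      congr 1
      rw [← Real.rpow_natCast w 2, ← Real.rpow_mul hw.le]
      congr 1
      ring
    rwa [e1, e2] at h1
  rw [Real.rpow_neg hw.le, Real.rpow_neg ht.le]
  rw [inv_eq_one_div, inv_eq_one_div, mul_one_div,
    div_le_div_iff₀ (by positivity) (by positivity)]
  have hts : 0 < t ^ ((m:ℝ) * s) := Real.rpow_pos_of_pos ht _
  nlinarith

lemma qhw_growth {n : ℕ} (M : Fin n → ℕ) (mlow : ℕ) (hlow_le : ∀ j, mlow ≤ M j)
    (hml : 1 ≤ mlow) (hn : 1 ≤ n) (η : EuclideanSpace ℝ (Fin n)) :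
    (1 + ‖η‖) ^ (2 * mlow) ≤ (2 ^ (2 * mlow + 1) * (n:ℝ) ^ mlow) * quasiHomWeight M η ^ 2 := by
  set S : ℝ := ∑ j, η j ^ 2 with hS
  have hS0 : 0 ≤ S := Finset.sum_nonneg fun j _ => sq_nonneg _
  have hnorm : ‖η‖ ^ 2 = S := by
    rw [EuclideanSpace.norm_eq]
    rw [Real.sq_sqrt (Finset.sum_nonneg fun j _ => sq_nonneg _)]
    simp [sq_abs, hS]
  have hQ : quasiHomWeight M η ^ 2 = 1 + ∑ j, η j ^ (2 * M j) := qhw_sq M η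
  have hQ1 : (1:ℝ) ≤ quasiHomWeight M η ^ 2 := by
    rw [hQ]; linarith [qhw_sum_nonneg M η]
  have step1 : (1 + ‖η‖) ^ 2 ≤ 2 * (1 + S) := by
    have h2 : 0 ≤ ‖η‖ := norm_nonneg _
    nlinarith [sq_nonneg (1 - ‖η‖)]
  have step2 : (1 + ‖η‖) ^ (2 * mlow) ≤ 2 ^ mlow * (1 + S) ^ mlow := by
    calc (1 + ‖η‖) ^ (2 * mlow) = ((1 + ‖η‖) ^ 2) ^ mlow := by rw [← pow_mul]
      _ ≤ (2 * (1 + S)) ^ mlow := pow_le_pow_left₀ (by positivity) step1 _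
      _ = 2 ^ mlow * (1 + S) ^ mlow := mul_pow _ _ _
  have step3 : (1 + S) ^ mlow ≤ 2 ^ mlow * (1 + S ^ mlow) := by
    rcases le_total S 1 with h | h
    · calc (1 + S) ^ mlow ≤ 2 ^ mlow := pow_le_pow_left₀ (by linarith) (by linarith) _
        _ ≤ 2 ^ mlow * (1 + S ^ mlow) := by
            have : (0:ℝ) ≤ S ^ mlow := pow_nonneg hS0 _
            nlinarith [pow_pos (show (0:ℝ) < 2 by norm_num) mlow]
    · calc (1 + S) ^ mlow ≤ (2 * S) ^ mlow := pow_le_pow_left₀ (by linarith) (by linarith) _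
        _ = 2 ^ mlow * S ^ mlow := mul_pow _ _ _
        _ ≤ 2 ^ mlow * (1 + S ^ mlow) := by
            have : (0:ℝ) < 2 ^ mlow := pow_pos (by norm_num) _
            nlinarith
  have step4 : S ^ mlow ≤ (n:ℝ) ^ mlow * quasiHomWeight M η ^ 2 := by
    have hcard : ((Finset.univ : Finset (Fin n)).card : ℝ) = n := by simp
    have hps := pow_sum_div_card_le_sum_pow
      (f := fun j : Fin n => η j ^ 2) (s := Finset.univ) (fun i _ => sq_nonneg _) (mlow - 1)
    rw [Nat.sub_add_cancel hml] at hps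
    rw [hcard, div_le_iff₀ (by positivity)] at hps
    have hterm : ∀ j : Fin n, (η j ^ 2) ^ mlow ≤ 1 + η j ^ (2 * M j) := by
      intro j
      have he : η j ^ (2 * M j) = (η j ^ 2) ^ M j := by rw [← pow_mul]
      rcases le_total (η j ^ 2) 1 with h | h
      · have := pow_le_one₀ (sq_nonneg (η j)) h (n := mlow)
        have h2 : (0:ℝ) ≤ η j ^ (2 * M j) := (even_two_mul _).pow_nonneg _
        linarith
      · have := pow_le_pow_right₀ h (hlow_le j)
        rw [he]; linarith
    have hsum : ∑ j, (η j ^ 2) ^ mlow ≤ (n:ℝ) * quasiHomWeight M η ^ 2 := by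
      calc ∑ j, (η j ^ 2) ^ mlow ≤ ∑ j : Fin n, (1 + η j ^ (2 * M j)) :=
            Finset.sum_le_sum fun j _ => hterm j
        _ = n + ∑ j, η j ^ (2 * M j) := by
            rw [Finset.sum_add_distrib]; simp
        _ ≤ (n:ℝ) * quasiHomWeight M η ^ 2 := by
            rw [hQ]
            have hn1 : (1:ℝ) ≤ n := by exact_mod_cast hn
            have := qhw_sum_nonneg M η
            nlinarith
    calc S ^ mlow ≤ (∑ j, (η j ^ 2) ^ mlow) * (n:ℝ) ^ (mlow - 1) := hps
      _ ≤ ((n:ℝ) * quasiHomWeight M η ^ 2) * (n:ℝ) ^ (mlow - 1) :=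
          mul_le_mul_of_nonneg_right hsum (by positivity)
      _ = (n:ℝ) ^ (mlow - 1 + 1) * quasiHomWeight M η ^ 2 := by ring
      _ = (n:ℝ) ^ mlow * quasiHomWeight M η ^ 2 := by rw [Nat.sub_add_cancel hml]
  have hn1 : (1:ℝ) ≤ (n:ℝ) ^ mlow := one_le_pow₀ (by exact_mod_cast hn)
  have h2m : (0:ℝ) < 2 ^ mlow := pow_pos (by norm_num) _
  calc (1 + ‖η‖) ^ (2 * mlow) ≤ 2 ^ mlow * (1 + S) ^ mlow := step2
    _ ≤ 2 ^ mlow * (2 ^ mlow * (1 + S ^ mlow)) := mul_le_mul_of_nonneg_left step3 h2m.le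
    _ ≤ 2 ^ mlow * (2 ^ mlow * ((1 + (n:ℝ) ^ mlow) * quasiHomWeight M η ^ 2)) := by
        have h' : 1 + S ^ mlow ≤ (1 + (n:ℝ) ^ mlow) * quasiHomWeight M η ^ 2 := by
          have e : (1 + (n:ℝ) ^ mlow) * quasiHomWeight M η ^ 2
              = quasiHomWeight M η ^ 2 + (n:ℝ) ^ mlow * quasiHomWeight M η ^ 2 := by ring
          rw [e]; linarith [step4, hQ1]
        exact mul_le_mul_of_nonneg_left (mul_le_mul_of_nonneg_left h' h2m.le) h2m.le
    _ ≤ 2 ^ mlow * (2 ^ mlow * ((2 * (n:ℝ) ^ mlow) * quasiHomWeight M η ^ 2)) := by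
        have h'' : (1:ℝ) + (n:ℝ) ^ mlow ≤ 2 * (n:ℝ) ^ mlow := by linarith
        have h3 := mul_le_mul_of_nonneg_right h'' (sq_nonneg (quasiHomWeight M η))
        exact mul_le_mul_of_nonneg_left (mul_le_mul_of_nonneg_left h3 h2m.le) h2m.le
    _ = (2 ^ (2 * mlow + 1) * (n:ℝ) ^ mlow) * quasiHomWeight M η ^ 2 := by
        rw [pow_succ, two_mul, pow_add]; ring

/-- For `s > n / m_*` (with `m_* = min_j m_j`), the power `⟨·⟩_M^s` of the
quasi-homogeneous weight satisfies Beurling's condition (B):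
`sup_ξ ∫ ⟨ξ⟩_M^s / (⟨ξ-η⟩_M^s * ⟨η⟩_M^s) dη < ∞`. -/
theorem quasiHomWeight_pow_beurling {n : ℕ} (M : Fin n → ℕ) (mlow : ℕ) (s : ℝ)
    (hM : ∀ j, 1 ≤ M j) (hlow_le : ∀ j, mlow ≤ M j) (hlow_mem : ∃ j, M j = mlow)
    (hs : (n : ℝ) / mlow < s) :
    ∃ C : ℝ, 0 < C ∧ ∀ ξ : EuclideanSpace ℝ (Fin n),
      (∫⁻ η, ENNReal.ofReal (quasiHomWeight M ξ ^ s /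
        (quasiHomWeight M (ξ - η) ^ s * quasiHomWeight M η ^ s)) ∂volume) ≤
          ENNReal.ofReal C := by
  obtain ⟨j0, hj0⟩ := hlow_mem
  have hml : 1 ≤ mlow := hj0 ▸ hM j0
  have hn : 1 ≤ n := j0.pos
  have hmlr : (0:ℝ) < mlow := by exact_mod_cast hml
  have hnr0 : (0:ℝ) ≤ (n:ℝ) / mlow := by positivity
  have hs0 : 0 < s := lt_of_le_of_lt hnr0 hs
  set K := Finset.univ.sup M with hK
  set c0 : ℝ := Real.sqrt (2 * 4 ^ K) with hc0
  have hc0pos : 0 < c0 := Real.sqrt_pos.2 (by positivity)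
  set D : ℝ := 2 ^ (2 * mlow + 1) * (n:ℝ) ^ mlow with hD
  have hDpos : 0 < D := by positivity
  set r : ℝ := (mlow:ℝ) * s with hr
  have hnr : (n:ℝ) < r := by
    rw [hr]
    rw [div_lt_iff₀ hmlr] at hs
    linarith
  set c2 : ℝ := c0 ^ s * D ^ (s / 2) with hc2
  have hc2pos : 0 < c2 := by positivity
  have hfin : (∫⁻ x : EuclideanSpace ℝ (Fin n),
      ENNReal.ofReal ((1 + ‖x‖) ^ (-r)) ∂volume) < ⊤ :=
    finite_integral_one_add_norm (by simpa using hnr)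
  set J := ∫⁻ x : EuclideanSpace ℝ (Fin n),
      ENNReal.ofReal ((1 + ‖x‖) ^ (-r)) ∂volume with hJ
  refine ⟨2 * c2 * J.toReal + 1, by positivity, fun ξ => ?_⟩
  have hpt : ∀ η : EuclideanSpace ℝ (Fin n),
      ENNReal.ofReal (quasiHomWeight M ξ ^ s /
        (quasiHomWeight M (ξ - η) ^ s * quasiHomWeight M η ^ s))
      ≤ ENNReal.ofReal (c2 * (1 + ‖ξ - η‖) ^ (-r))
        + ENNReal.ofReal (c2 * (1 + ‖η‖) ^ (-r)) := by
    intro η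
    have hwa : 0 < quasiHomWeight M (ξ - η) := qhw_pos M _
    have hwb : 0 < quasiHomWeight M η := qhw_pos M _
    have h1 : quasiHomWeight M ξ ^ s /
        (quasiHomWeight M (ξ - η) ^ s * quasiHomWeight M η ^ s)
        ≤ c0 ^ s * (quasiHomWeight M (ξ - η) ^ (-s) + quasiHomWeight M η ^ (-s)) :=
      ratio_aux _ _ _ _ _ hwa hwb hc0pos (qhw_pos M ξ).le hs0.le (qhw_peetre M ξ η)
    have h2a : quasiHomWeight M (ξ - η) ^ (-s) ≤ D ^ (s / 2) * (1 + ‖ξ - η‖) ^ (-r) :=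
      invert_aux _ _ _ _ mlow (by positivity) hwa hDpos hs0.le
        (qhw_growth M mlow hlow_le hml hn (ξ - η))
    have h2b : quasiHomWeight M η ^ (-s) ≤ D ^ (s / 2) * (1 + ‖η‖) ^ (-r) :=
      invert_aux _ _ _ _ mlow (by positivity) hwb hDpos hs0.le
        (qhw_growth M mlow hlow_le hml hn η)
    have hc0s : 0 < c0 ^ s := Real.rpow_pos_of_pos hc0pos s
    have h3 : quasiHomWeight M ξ ^ s /
        (quasiHomWeight M (ξ - η) ^ s * quasiHomWeight M η ^ s)
        ≤ c2 * (1 + ‖ξ - η‖) ^ (-r) + c2 * (1 + ‖η‖) ^ (-r) := by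
      calc quasiHomWeight M ξ ^ s /
          (quasiHomWeight M (ξ - η) ^ s * quasiHomWeight M η ^ s)
          ≤ c0 ^ s * (quasiHomWeight M (ξ - η) ^ (-s) + quasiHomWeight M η ^ (-s)) := h1
        _ ≤ c0 ^ s * (D ^ (s / 2) * (1 + ‖ξ - η‖) ^ (-r)
              + D ^ (s / 2) * (1 + ‖η‖) ^ (-r)) := by
            exact mul_le_mul_of_nonneg_left (add_le_add h2a h2b) hc0s.le
        _ = c2 * (1 + ‖ξ - η‖) ^ (-r) + c2 * (1 + ‖η‖) ^ (-r) := by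
            rw [hc2]; ring
    calc ENNReal.ofReal (quasiHomWeight M ξ ^ s /
          (quasiHomWeight M (ξ - η) ^ s * quasiHomWeight M η ^ s))
        ≤ ENNReal.ofReal (c2 * (1 + ‖ξ - η‖) ^ (-r) + c2 * (1 + ‖η‖) ^ (-r)) :=
          ENNReal.ofReal_le_ofReal h3
      _ = ENNReal.ofReal (c2 * (1 + ‖ξ - η‖) ^ (-r))
            + ENNReal.ofReal (c2 * (1 + ‖η‖) ^ (-r)) :=
          ENNReal.ofReal_add (by positivity) (by positivity)
  have hmeas : Measurable fun η : EuclideanSpace ℝ (Fin n) =>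
      ENNReal.ofReal (c2 * (1 + ‖ξ - η‖) ^ (-r)) := by
    apply Measurable.ennreal_ofReal
    fun_prop
  have hsub : (∫⁻ η, ENNReal.ofReal (c2 * (1 + ‖ξ - η‖) ^ (-r)) ∂volume)
      = ∫⁻ η, ENNReal.ofReal (c2 * (1 + ‖η‖) ^ (-r)) ∂volume :=
    (Measure.measurePreserving_sub_left volume ξ).lintegral_comp_emb
      (MeasurableEquiv.subLeft ξ).measurableEmbedding
      (fun y => ENNReal.ofReal (c2 * (1 + ‖y‖) ^ (-r)))
  have hone : (∫⁻ η : EuclideanSpace ℝ (Fin n),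
      ENNReal.ofReal (c2 * (1 + ‖η‖) ^ (-r)) ∂volume) = ENNReal.ofReal c2 * J := by
    rw [hJ, ← lintegral_const_mul' _ _ ENNReal.ofReal_ne_top]
    congr 1
    ext η
    rw [← ENNReal.ofReal_mul hc2pos.le]
  calc (∫⁻ η, ENNReal.ofReal (quasiHomWeight M ξ ^ s /
        (quasiHomWeight M (ξ - η) ^ s * quasiHomWeight M η ^ s)) ∂volume)
      ≤ ∫⁻ η, (ENNReal.ofReal (c2 * (1 + ‖ξ - η‖) ^ (-r))
          + ENNReal.ofReal (c2 * (1 + ‖η‖) ^ (-r))) ∂volume := lintegral_mono hpt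
    _ = (∫⁻ η, ENNReal.ofReal (c2 * (1 + ‖ξ - η‖) ^ (-r)) ∂volume)
          + ∫⁻ η, ENNReal.ofReal (c2 * (1 + ‖η‖) ^ (-r)) ∂volume :=
        lintegral_add_left hmeas _
    _ = 2 * (ENNReal.ofReal c2 * J) := by
        rw [hsub, hone, two_mul]
    _ ≤ ENNReal.ofReal (2 * c2 * J.toReal + 1) := by
        have hJt : J = ENNReal.ofReal J.toReal := (ENNReal.ofReal_toReal hfin.ne).symm
        rw [hJt]
        rw [show (2 : ENNReal) = ENNReal.ofReal 2 by norm_num]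
        rw [← ENNReal.ofReal_mul hc2pos.le, ← ENNReal.ofReal_mul (by norm_num : (0:ℝ) ≤ 2)]
        apply ENNReal.ofReal_le_ofReal
        rw [ENNReal.toReal_ofReal ENNReal.toReal_nonneg]
        nlinarith [ENNReal.toReal_nonneg (a := J)]
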